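/- Let d be a positive rational number that is not the square of a rational. Suppose C, D, C', D' ∈ ℚ satisfy D·C = C'·D' and d·C² + D² = d·D'² + C'². Then (C, D) = (D', C') or (C, D) = (−D', −C'). -/
import Mathlib


/-- For non-square `d > 0`: if `DC = C'D'` and `dC² + D² = dD'² + C'²`, then
`(C,D) = (D',C')` or `(C,D) = (−D',−C')`. -/
theorem stmt_12 (d : ℚ) (hd : 0 < d) (hdns : ¬∃ r : ℚ, r ^ 2 = d)
    (C D C' D' : ℚ) (h1 : D * C = C' * D')
    (h2 : d * C ^ 2 + D ^ 2 = d * D' ^ 2 + C' ^ 2) :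
    (C = D' ∧ D = C') ∨ (C = -D' ∧ D = -C') := by
  have hd0 : d ≠ 0 := ne_of_gt hd
  have key : (d * C ^ 2 - d * D' ^ 2) * (d * C ^ 2 - C' ^ 2) = 0 := by
    linear_combination (d * C ^ 2) * h2 + (-d * (D * C + C' * D')) * h1
  rcases mul_eq_zero.mp key with hk | hk
  · -- C² = D'², D² = C'²
    have hC2 : C ^ 2 = D' ^ 2 := by
      have : d * C ^ 2 = d * D' ^ 2 := by linarith
      exact mul_left_cancel₀ hd0 this
    have hD2 : D ^ 2 = C' ^ 2 := by nlinarith [hC2, h2]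
    have h3 : (C - D') * (C + D') = 0 := by ring_nf; linarith [hC2]
    have h4 : (D - C') * (D + C') = 0 := by ring_nf; linarith [hD2]
    rcases mul_eq_zero.mp h3 with h3 | h3 <;> rcases mul_eq_zero.mp h4 with h4 | h4
    · left; constructor <;> linarith
    · -- C = D', D = -C' : then C'D' = -C'D', so C'D' = 0
      have h5 : C' * D' = 0 := by linear_combination (-h1 + D * h3 + D' * h4) / 2
      rcases mul_eq_zero.mp h5 with h5 | h5
      · left; constructor <;> linarith
      · right; constructor <;> linarith
    · -- C = -D', D = C'
      have h5 : C' * D' = 0 := by linear_combination (-h1 + D * h3 - D' * h4) / 2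
      rcases mul_eq_zero.mp h5 with h5 | h5
      · right; constructor <;> linarith
      · left; constructor <;> linarith
    · right; constructor <;> linarith
  · -- d C² = C'²
    by_cases hC : C = 0
    · have hC' : C' = 0 := by
        have : C' ^ 2 = 0 := by rw [hC] at hk; linarith
        exact pow_eq_zero_iff (n := 2) (by norm_num) |>.mp this
      have hD'0 : D' = 0 := by
        by_contra hD'
        exact hdns ⟨D / D', by field_simp; nlinarith [h2, hC, hC']⟩
      have hD0 : D = 0 := by
        have : D ^ 2 = 0 := by rw [hC, hC', hD'0] at h2; linarith
        exact pow_eq_zero_iff (n := 2) (by norm_num) |>.mp this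
      left; constructor <;> simp [hC, hD0, hC', hD'0]
    · exact absurd ⟨C' / C, by field_simp; nlinarith [hk]⟩ hdns
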